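/- arXiv:1610.02072 — 5 statements merged into one kernel-verified Lean document; each statement's English description precedes it below -/
import Mathlib

section
/- For all real a ≤ 1, exp(a) ≤ 1 + a + (e - 2)·a², where e is Euler's constant. -/
open Real Nat

lemma real_exp_tsum (x : ℝ) : Real.exp x = ∑' n : ℕ, x ^ n / (n ! : ℝ) := by
  rw [Real.exp_eq_exp_ℝ, NormedSpace.exp_eq_tsum_div]

lemma add_one_one (b : ℕ) : b + 1 + 1 = b + 2 := rfl

lemma exp_sub_two : ∑' n : ℕ, (1:ℝ) / (((n+2)! : ℕ) : ℝ) = Real.exp 1 - 2 := by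
  have hs : Summable (fun n : ℕ => (1:ℝ) ^ n / (n ! : ℝ)) := Real.summable_pow_div_factorial 1
  have h1 := real_exp_tsum 1
  rw [Summable.tsum_eq_zero_add hs, Summable.tsum_eq_zero_add ((summable_nat_add_iff 1).2 hs)] at h1
  simp only [one_pow, add_one_one] at h1
  norm_num at h1
  simp only [one_div]
  linarith [h1]

lemma key (a : ℝ) (h0 : 0 ≤ a) (h1 : a ≤ 1) :
    Real.exp a ≤ 1 + a + (Real.exp 1 - 2) * a ^ 2 := by
  have hs : Summable (fun n : ℕ => a ^ n / (n ! : ℝ)) := Real.summable_pow_div_factorial a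
  have hs2 : Summable (fun n : ℕ => a ^ (n+2) / ((n+2)! : ℝ)) := by
    exact_mod_cast (summable_nat_add_iff 2).2 hs
  have hs2' : Summable (fun n : ℕ => a ^ 2 / ((n+2)! : ℝ)) := by
    have := (summable_nat_add_iff 2).2 (Real.summable_pow_div_factorial 1)
    simpa [div_eq_mul_inv, mul_comm] using this.mul_left (a^2)
  have hexp := real_exp_tsum a
  rw [Summable.tsum_eq_zero_add hs, Summable.tsum_eq_zero_add ((summable_nat_add_iff 1).2 hs)] at hexp
  simp only [add_one_one] at hexp
  norm_num at hexp
  have hle : ∑' n : ℕ, a ^ (n+2) / ((n+2)! : ℝ) ≤ ∑' n : ℕ, a ^ 2 / ((n+2)! : ℝ) := by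
    apply Summable.tsum_le_tsum _ hs2 hs2'
    intro n
    have hd : (0:ℝ) < (((n+2)! : ℕ) : ℝ) := by positivity
    apply (div_le_div_iff_of_pos_right hd).2
    calc a ^ (n+2) = a ^ 2 * a ^ n := by ring
      _ ≤ a ^ 2 := mul_le_of_le_one_right (by positivity) (pow_le_one₀ h0 h1)
  have heq : ∑' n : ℕ, a ^ 2 / ((n+2)! : ℝ) = (Real.exp 1 - 2) * a ^ 2 := by
    rw [← exp_sub_two, ← tsum_mul_right]
    congr 1 with n
    ring
  calc Real.exp a = 1 + a + ∑' n : ℕ, a ^ (n+2) / ((n+2)! : ℝ) := by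
        rw [hexp]; ring
    _ ≤ 1 + a + (Real.exp 1 - 2) * a ^ 2 := by rw [← heq]; linarith

theorem exp_le_one_add_add_sq (a : ℝ) (ha : a ≤ 1) :
    Real.exp a ≤ 1 + a + (Real.exp 1 - 2) * a ^ 2 := by
  have hegt : (2.7182818283 : ℝ) < Real.exp 1 := Real.exp_one_gt_d9
  have hepos : (0:ℝ) < Real.exp 1 := Real.exp_pos 1
  rcases le_or_gt 0 a with h0 | h0
  · exact key a h0 ha
  rcases le_or_gt a (-1) with hm | hm
  · -- a ≤ -1
    have h1 : Real.exp a ≤ Real.exp (-1) := Real.exp_le_exp.2 (by linarith)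
    rw [Real.exp_neg] at h1
    have h2 : (Real.exp 1)⁻¹ ≤ Real.exp 1 - 2 := by
      rw [inv_le_iff_one_le_mul₀ hepos]
      nlinarith
    have h3 : (0:ℝ) ≤ (a + 1) + (Real.exp 1 - 2) * (a ^ 2 - 1) := by
      have heq : (a + 1) + (Real.exp 1 - 2) * (a ^ 2 - 1)
          = (-(1 + a)) * (-(1 + (Real.exp 1 - 2) * (a - 1))) := by ring
      rw [heq]
      apply mul_nonneg (by linarith)
      nlinarith
    linarith
  · -- -1 < a < 0
    have hb := Real.exp_bound (x := a) (by rw [abs_le]; constructor <;> linarith)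
      (show 0 < 4 by norm_num)
    rw [abs_le] at hb
    have hb2 := hb.2
    simp [Finset.sum_range_succ, Nat.factorial] at hb2
    have habs : |a| ^ 4 = a ^ 4 := by
      rw [← abs_pow, abs_of_nonneg (by positivity)]
    rw [habs] at hb2
    have ha2 : a ^ 2 ≤ 1 := by nlinarith
    have ha4 : a ^ 4 ≤ a ^ 2 := by nlinarith [sq_nonneg a, sq_nonneg (a ^ 2)]
    have ha3 : a ^ 3 ≤ 0 := by nlinarith [sq_nonneg a]
    nlinarith [sq_nonneg a]
end

section
/- Let a, x₁, y ∈ ℝⁿ with a_i + x_{1,i} ≥ α > 0 for all i, and suppose ‖y - x₁‖₂ ≤ 2B. Then the Kullback–Leibler divergence D(a + y, a + x₁) := ∑_i (a_i + y_i) ln((a_i + y_i)/(a_i + x_{1,i})) − ∑_i (a_i + y_i) + ∑_i (a_i + x_{1,i}) satisfies D(a + y, a + x₁) ≤ ‖y − x₁‖₂²/α ≤ 4B²/α, provided a_i + y_i ≥ 0 for all i. -/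
lemma kl_pointwise (u v : ℝ) (hu : 0 ≤ u) (hv : 0 < v) :
    u * Real.log (u / v) - u + v ≤ (u - v) ^ 2 / v := by
  rcases eq_or_lt_of_le hu with h | h
  · rw [← h]
    simp
    rw [sq, mul_div_assoc, div_self hv.ne', mul_one]
  · have hlog : Real.log (u / v) ≤ u / v - 1 :=
      Real.log_le_sub_one_of_pos (div_pos h hv)
    have : u * Real.log (u / v) ≤ u * (u / v - 1) :=
      mul_le_mul_of_nonneg_left hlog hu
    have hne : v ≠ 0 := ne_of_gt hv
    calc u * Real.log (u / v) - u + v ≤ u * (u / v - 1) - u + v := by linarith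
    _ = (u - v) ^ 2 / v := by field_simp; ring

theorem kl_div_le_norm_sq_div (n : ℕ) (a x₁ y : EuclideanSpace ℝ (Fin n))
    (α B : ℝ) (hα : 0 < α) (hB : 0 < B)
    (hax : ∀ i, α ≤ a i + x₁ i) (hay : ∀ i, 0 ≤ a i + y i)
    (hnorm : ‖y - x₁‖ ≤ 2 * B) :
    (∑ i, (a i + y i) * Real.log ((a i + y i) / (a i + x₁ i))
      - ∑ i, (a i + y i) + ∑ i, (a i + x₁ i) ≤ ‖y - x₁‖ ^ 2 / α)
    ∧ ‖y - x₁‖ ^ 2 / α ≤ 4 * B ^ 2 / α := by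
  have hnsq : ‖y - x₁‖ ^ 2 = ∑ i, (y i - x₁ i) ^ 2 := by
    rw [EuclideanSpace.norm_eq, Real.sq_sqrt (by positivity)]
    congr 1; ext i
    simp [sq_abs]
  constructor
  · have key : ∀ i : Fin n,
        (a i + y i) * Real.log ((a i + y i) / (a i + x₁ i))
          - (a i + y i) + (a i + x₁ i) ≤ (y i - x₁ i) ^ 2 / α := by
      intro i
      have hv : 0 < a i + x₁ i := lt_of_lt_of_le hα (hax i)
      have h1 := kl_pointwise (a i + y i) (a i + x₁ i) (hay i) hv
      have h2 : ((a i + y i) - (a i + x₁ i)) ^ 2 / (a i + x₁ i)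
          ≤ ((a i + y i) - (a i + x₁ i)) ^ 2 / α :=
        div_le_div_of_nonneg_left (by positivity) hα (hax i)
      have h3 : (a i + y i) - (a i + x₁ i) = y i - x₁ i := by ring
      rw [h3] at h1 h2
      linarith
    calc ∑ i, (a i + y i) * Real.log ((a i + y i) / (a i + x₁ i))
          - ∑ i, (a i + y i) + ∑ i, (a i + x₁ i)
        = ∑ i, ((a i + y i) * Real.log ((a i + y i) / (a i + x₁ i))
            - (a i + y i) + (a i + x₁ i)) := by
          simp only [Finset.sum_add_distrib, Finset.sum_sub_distrib]
      _ ≤ ∑ i, (y i - x₁ i) ^ 2 / α := Finset.sum_le_sum fun i _ => key i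
      _ = ‖y - x₁‖ ^ 2 / α := by rw [hnsq, Finset.sum_div]
  · have h1 : (0:ℝ) ≤ ‖y - x₁‖ := norm_nonneg _
    have : ‖y - x₁‖ ^ 2 ≤ 4 * B ^ 2 := by nlinarith
    gcongr
end

section
/- Let v₁, ..., vₙ ∈ ℝⁿ be a C-approximate barycentric spanner of a polytope P ⊆ ℝⁿ (i.e., every x ∈ P can be written x = ∑_i λ_{x,i} v_i with |λ_{x,i}| ≤ C). Then for any probability distribution μ supported on P, the covariance matrices satisfy E_{x∼μ}[x xᵀ] ⪯ C² n² · (1/n) ∑_{i=1}^{n} v_i v_iᵀ. Consequently, the minimal eigenvalue of (1/n) ∑_i v_i v_iᵀ is at least λ_min(E_{x∼μ}[x xᵀ]) / (C² n²). -/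
open scoped Matrix

private lemma qf_vecMulVec {n : ℕ} (a u : Fin n → ℝ) :
    u ⬝ᵥ (Matrix.vecMulVec a a) *ᵥ u = (a ⬝ᵥ u) ^ 2 := by
  simp only [dotProduct, Matrix.mulVec, Matrix.vecMulVec_apply, sq, Finset.sum_mul,
    Finset.mul_sum]
  exact Finset.sum_congr rfl fun i _ => Finset.sum_congr rfl fun j _ => by ring

private lemma sum_mulVec' {n : ℕ} {ι : Type*} (s : Finset ι) (f : ι → Matrix (Fin n) (Fin n) ℝ)
    (u : Fin n → ℝ) : (∑ i ∈ s, f i) *ᵥ u = ∑ i ∈ s, f i *ᵥ u := by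
  ext j
  simp only [Matrix.mulVec, dotProduct, Matrix.sum_apply, Finset.sum_apply,
    Finset.sum_mul]
  exact Finset.sum_comm

private lemma dotProduct_sum' {n : ℕ} {ι : Type*} (s : Finset ι) (u : Fin n → ℝ)
    (f : ι → Fin n → ℝ) : u ⬝ᵥ (∑ i ∈ s, f i) = ∑ i ∈ s, u ⬝ᵥ f i := by
  simp only [dotProduct, Finset.sum_apply, Finset.mul_sum]
  exact Finset.sum_comm

private lemma herm_vecMulVec {n : ℕ} (a : Fin n → ℝ) :
    (Matrix.vecMulVec a a).IsHermitian :=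
  Matrix.ext fun i j => by
    simp [Matrix.conjTranspose_apply, Matrix.vecMulVec_apply, mul_comm]

private lemma psd_smul {n : ℕ} {M : Matrix (Fin n) (Fin n) ℝ} (hM : M.PosSemidef)
    {a : ℝ} (ha : 0 ≤ a) : (a • M).PosSemidef := by
  refine Matrix.posSemidef_iff_dotProduct_mulVec.mpr ⟨?_, fun u => ?_⟩
  · have := hM.1
    unfold Matrix.IsHermitian at *
    rw [Matrix.conjTranspose_smul, this]
    simp
  · rw [Matrix.smul_mulVec, dotProduct_smul, smul_eq_mul]
    exact mul_nonneg ha ((Matrix.posSemidef_iff_dotProduct_mulVec.mp hM).2 u)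

/-- Fitness of barycentric spanners: the covariance of any distribution over the
polytope is dominated (in the Loewner order) by `C² n²` times the covariance of the
uniform distribution on a `C`-approximate barycentric spanner; consequently the minimal
eigenvalue of the spanner covariance is at least `λ_min / (C² n²)`, expressed via
`M ⪰ c • 1 ↔ λ_min(M) ≥ c`. -/
theorem barycentric_spanner_fitness (n : ℕ) (hn : 0 < n) (C : ℝ) (hC : 1 < C)
    (P : Set (Fin n → ℝ)) (v : Fin n → (Fin n → ℝ)) (hvP : ∀ i, v i ∈ P)
    (hspanner : ∀ x ∈ P, ∃ lam : Fin n → ℝ, (∀ i, |lam i| ≤ C) ∧ x = ∑ i, lam i • v i)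
    (A : Finset (Fin n → ℝ)) (hA : ↑A ⊆ P)
    (μ : (Fin n → ℝ) → ℝ) (hμ0 : ∀ x ∈ A, 0 ≤ μ x) (hμ1 : ∑ x ∈ A, μ x = 1) :
    ((C ^ 2 * n ^ 2) • ((n : ℝ)⁻¹ • ∑ i, Matrix.vecMulVec (v i) (v i))
        - ∑ x ∈ A, μ x • Matrix.vecMulVec x x).PosSemidef
    ∧ ∀ c : ℝ,
        ((∑ x ∈ A, μ x • Matrix.vecMulVec x x)
            - c • (1 : Matrix (Fin n) (Fin n) ℝ)).PosSemidef →
        (((n : ℝ)⁻¹ • ∑ i, Matrix.vecMulVec (v i) (v i))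
            - (c / (C ^ 2 * n ^ 2)) • (1 : Matrix (Fin n) (Fin n) ℝ)).PosSemidef := by
  have hn0 : (n : ℝ) ≠ 0 := Nat.cast_ne_zero.mpr hn.ne'
  have hC0 : (0:ℝ) < C := lt_trans one_pos hC
  -- key pointwise inequality
  have key : ∀ u : Fin n → ℝ, ∀ x ∈ P,
      (x ⬝ᵥ u) ^ 2 ≤ C ^ 2 * n * ∑ i, (v i ⬝ᵥ u) ^ 2 := by
    intro u x hx
    obtain ⟨lam, hlam, hxe⟩ := hspanner x hx
    have hxu : x ⬝ᵥ u = ∑ i, lam i * (v i ⬝ᵥ u) := by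
      rw [hxe, dotProduct_comm, dotProduct_sum']
      refine Finset.sum_congr rfl fun i _ => ?_
      rw [dotProduct_smul, smul_eq_mul, dotProduct_comm]
    have hcs := Finset.sum_mul_sq_le_sq_mul_sq Finset.univ lam (fun i => v i ⬝ᵥ u)
    have hsumlam : ∑ i : Fin n, lam i ^ 2 ≤ C ^ 2 * n := by
      calc ∑ i : Fin n, lam i ^ 2 ≤ ∑ _i : Fin n, C ^ 2 :=
            Finset.sum_le_sum fun i _ => by
              have := hlam i
              calc lam i ^ 2 = |lam i| ^ 2 := (sq_abs _).symm
                _ ≤ C ^ 2 := pow_le_pow_left₀ (abs_nonneg _) this 2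
        _ = C ^ 2 * n := by simp [mul_comm]
    have hg0 : 0 ≤ ∑ i : Fin n, (v i ⬝ᵥ u) ^ 2 :=
      Finset.sum_nonneg fun i _ => sq_nonneg _
    calc (x ⬝ᵥ u) ^ 2 = (∑ i, lam i * (v i ⬝ᵥ u)) ^ 2 := by rw [hxu]
      _ ≤ (∑ i : Fin n, lam i ^ 2) * ∑ i, (v i ⬝ᵥ u) ^ 2 := hcs
      _ ≤ (C ^ 2 * n) * ∑ i, (v i ⬝ᵥ u) ^ 2 := mul_le_mul_of_nonneg_right hsumlam hg0
  -- quadratic forms of the two matrices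
  have qf1 : ∀ u : Fin n → ℝ,
      u ⬝ᵥ ((C ^ 2 * n ^ 2) • ((n : ℝ)⁻¹ • ∑ i, Matrix.vecMulVec (v i) (v i))) *ᵥ u
        = C ^ 2 * n ^ 2 * ((n : ℝ)⁻¹ * ∑ i, (v i ⬝ᵥ u) ^ 2) := by
    intro u
    rw [Matrix.smul_mulVec, Matrix.smul_mulVec, sum_mulVec',
      dotProduct_smul, dotProduct_smul, dotProduct_sum']
    simp only [smul_eq_mul]
    congr 2
    exact Finset.sum_congr rfl fun i _ => qf_vecMulVec (v i) u
  have qf2 : ∀ u : Fin n → ℝ,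
      u ⬝ᵥ (∑ x ∈ A, μ x • Matrix.vecMulVec x x) *ᵥ u
        = ∑ x ∈ A, μ x * (x ⬝ᵥ u) ^ 2 := by
    intro u
    rw [sum_mulVec', dotProduct_sum']
    refine Finset.sum_congr rfl fun x _ => ?_
    rw [Matrix.smul_mulVec, dotProduct_smul, smul_eq_mul, qf_vecMulVec]
  have part1 : ((C ^ 2 * n ^ 2) • ((n : ℝ)⁻¹ • ∑ i, Matrix.vecMulVec (v i) (v i))
      - ∑ x ∈ A, μ x • Matrix.vecMulVec x x).PosSemidef := by
    rw [Matrix.posSemidef_iff_dotProduct_mulVec]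
    constructor
    · refine Matrix.IsHermitian.sub ?_ ?_
      · have h : (∑ i, Matrix.vecMulVec (v i) (v i)).IsHermitian := by
          unfold Matrix.IsHermitian
          rw [Matrix.conjTranspose_sum]
          exact Finset.sum_congr rfl fun i _ => herm_vecMulVec (v i)
        unfold Matrix.IsHermitian at *
        rw [Matrix.conjTranspose_smul, Matrix.conjTranspose_smul, h]
        simp
      · unfold Matrix.IsHermitian
        rw [Matrix.conjTranspose_sum]
        refine Finset.sum_congr rfl fun x _ => ?_
        rw [Matrix.conjTranspose_smul, herm_vecMulVec x]
        simp
    · intro u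
      rw [star_trivial, Matrix.sub_mulVec, dotProduct_sub, qf1, qf2, sub_nonneg]
      have hT : 0 ≤ ∑ i : Fin n, (v i ⬝ᵥ u) ^ 2 :=
        Finset.sum_nonneg fun i _ => sq_nonneg _
      have hrw : C ^ 2 * n ^ 2 * ((n : ℝ)⁻¹ * ∑ i, (v i ⬝ᵥ u) ^ 2)
          = C ^ 2 * n * ∑ i, (v i ⬝ᵥ u) ^ 2 := by
        field_simp
      rw [hrw]
      calc ∑ x ∈ A, μ x * (x ⬝ᵥ u) ^ 2
          ≤ ∑ x ∈ A, μ x * (C ^ 2 * n * ∑ i, (v i ⬝ᵥ u) ^ 2) :=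
            Finset.sum_le_sum fun x hx =>
              mul_le_mul_of_nonneg_left (key u x (hA hx)) (hμ0 x hx)
        _ = C ^ 2 * n * ∑ i, (v i ⬝ᵥ u) ^ 2 := by
            rw [← Finset.sum_mul, hμ1, one_mul]
  refine ⟨part1, fun c hc => ?_⟩
  have hadd := part1.add hc
  rw [sub_add_sub_cancel] at hadd
  have hpos : (0:ℝ) < C ^ 2 * n ^ 2 := by positivity
  have := psd_smul hadd (le_of_lt (inv_pos.mpr hpos))
  have hrw : (C ^ 2 * n ^ 2)⁻¹ •
        ((C ^ 2 * n ^ 2) • ((n : ℝ)⁻¹ • ∑ i, Matrix.vecMulVec (v i) (v i))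
          - c • (1 : Matrix (Fin n) (Fin n) ℝ))
      = ((n : ℝ)⁻¹ • ∑ i, Matrix.vecMulVec (v i) (v i))
          - (c / (C ^ 2 * n ^ 2)) • (1 : Matrix (Fin n) (Fin n) ℝ) := by
    rw [smul_sub, smul_smul, smul_smul, inv_mul_cancel₀ hpos.ne', one_mul, smul_smul,
      div_eq_inv_mul]
  rwa [hrw] at this
end

section
/- Let P ⊆ [α, β]ⁿ with 0 < α ≤ β be a convex set of ℓ₂-diameter at most B, let x ∈ ℝⁿ_{>0}, and let x* = argmin_{z∈P} D(z, x) be the KL (Bregman) projection of x onto P. Then for every z ∈ P and every y ∈ P: D(z, y) − D(z, x) ≤ (B/α)·‖x* − y‖₂ + D(z, x*) − D(z, x) ≤ (B/α)·‖x* − y‖₂, where the last step uses the Pythagorean inequality D(z, x*) ≤ D(z, x). -/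
noncomputable def KL {n : ℕ} (u v : EuclideanSpace ℝ (Fin n)) : ℝ :=
  ∑ i, u i * Real.log (u i / v i) - ∑ i, u i + ∑ i, v i

/-- Expanded form of KL for positive vectors. -/
lemma KL_eq {n : ℕ} (u v : EuclideanSpace ℝ (Fin n)) (hu : ∀ i, 0 < u i)
    (hv : ∀ i, 0 < v i) :
    KL u v = ∑ i, (u i * Real.log (u i) - u i * Real.log (v i) - u i + v i) := by
  unfold KL
  rw [show ∑ i, u i * Real.log (u i / v i)
      = ∑ i, (u i * Real.log (u i) - u i * Real.log (v i)) from
    Finset.sum_congr rfl fun i _ => by rw [Real.log_div (hu i).ne' (hv i).ne']; ring]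
  rw [Finset.sum_add_distrib, Finset.sum_sub_distrib, Finset.sum_sub_distrib,
    Finset.sum_sub_distrib]

/-- Cauchy-Schwarz for the Euclidean norm. -/
lemma cs_abs {n : ℕ} (u v : EuclideanSpace ℝ (Fin n)) :
    ∑ i, |u i| * |v i| ≤ ‖u‖ * ‖v‖ := by
  rw [EuclideanSpace.norm_eq u, EuclideanSpace.norm_eq v]
  simp only [Real.norm_eq_abs, sq_abs]
  have h := Finset.sum_mul_sq_le_sq_mul_sq Finset.univ (fun i => |u i|) (fun i => |v i|)
  simp only [sq_abs] at h
  calc ∑ i, |u i| * |v i| = Real.sqrt ((∑ i, |u i| * |v i|) ^ 2) :=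
        (Real.sqrt_sq (by positivity)).symm
    _ ≤ Real.sqrt ((∑ i, u i ^ 2) * ∑ i, v i ^ 2) := Real.sqrt_le_sqrt h
    _ = Real.sqrt (∑ i, u i ^ 2) * Real.sqrt (∑ i, v i ^ 2) :=
        Real.sqrt_mul (by positivity) _

/-- pointwise inequality used for the first part. -/
lemma ptwise (α a b c : ℝ) (hα : 0 < α) (ha : 0 < a) (hb : α ≤ b) (hc : 0 < c) :
    a * Real.log c - a * Real.log b + b - c ≤ |a - b| * |c - b| / α := by
  have hb0 : 0 < b := hα.trans_le hb
  have h1 : Real.log c - Real.log b ≤ c / b - 1 := by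
    have := Real.log_le_sub_one_of_pos (show 0 < c / b by positivity)
    rwa [Real.log_div hc.ne' hb0.ne'] at this
  have h2 : (a - b) * (c - b) ≤ |a - b| * |c - b| := by
    rw [← abs_mul]; exact le_abs_self _
  have h4 : a * (Real.log c - Real.log b) ≤ a * (c / b - 1) :=
    mul_le_mul_of_nonneg_left h1 ha.le
  have h5 : a * (c / b - 1) + b - c = (a - b) * (c - b) / b := by
    field_simp
    ring
  have h6 : (a - b) * (c - b) / b ≤ |a - b| * |c - b| / b := by gcongr
  have h7 : |a - b| * |c - b| / b ≤ |a - b| * |c - b| / α := by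
    gcongr
  linarith

/-- pointwise nonnegativity of KL terms. -/
lemma ptwise_nonneg (u v : ℝ) (hu : 0 < u) (hv : 0 < v) :
    0 ≤ u * (Real.log u - Real.log v) - u + v := by
  have h1 : Real.log v - Real.log u ≤ v / u - 1 := by
    have := Real.log_le_sub_one_of_pos (show 0 < v / u by positivity)
    rwa [Real.log_div hv.ne' hu.ne'] at this
  have h4 : u * (Real.log v - Real.log u) ≤ u * (v / u - 1) :=
    mul_le_mul_of_nonneg_left h1 hu.le
  have h5 : u * (v / u - 1) = v - u := by field_simp
  nlinarith

/-- if a function has a one-sided local minimum at 0, its derivative is nonnegative. -/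
lemma slope_min (f : ℝ → ℝ) (D : ℝ) (hD : HasDerivAt f D 0)
    (hmin : ∀ t ∈ Set.Ioo (0:ℝ) 1, f 0 ≤ f t) : 0 ≤ D := by
  have hd' : HasDerivWithinAt f D (Set.Ioi 0) 0 := hD.hasDerivWithinAt
  rw [hasDerivWithinAt_iff_tendsto_slope] at hd'
  rw [Set.diff_singleton_eq_self (by simp : (0:ℝ) ∉ Set.Ioi 0)] at hd'
  refine ge_of_tendsto hd' ?_
  filter_upwards [Ioo_mem_nhdsGT_of_mem (Set.left_mem_Ico.2 zero_lt_one)] with t ht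
  rw [slope_def_field]
  have h1 : f 0 ≤ f t := hmin t ht
  have h2 : (0:ℝ) < t - 0 := by simpa using ht.1
  exact div_nonneg (by linarith) h2.le

/-- derivative of one coordinate of the KL along a segment. -/
lemma coord_deriv (a b v : ℝ) (ha : 0 < a) :
    HasDerivAt (fun t : ℝ => (a + t * (b - a)) * Real.log (a + t * (b - a))
      - (a + t * (b - a)) * Real.log v - (a + t * (b - a)) + v)
      ((b - a) * (Real.log a - Real.log v)) 0 := by
  have hin : HasDerivAt (fun t : ℝ => a + t * (b - a)) (b - a) 0 := by
    simpa using ((hasDerivAt_id (0:ℝ)).mul_const (b - a)).const_add a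
  have hout : HasDerivAt (fun u : ℝ => u * Real.log u - u * Real.log v - u + v)
      (Real.log a - Real.log v) a := by
    have h1 := Real.hasDerivAt_mul_log ha.ne'
    have h2 : HasDerivAt (fun u : ℝ => u * Real.log v) (Real.log v) a :=
      hasDerivAt_mul_const _
    have h3 := ((h1.sub h2).sub (hasDerivAt_id a)).add_const v
    exact h3.congr_deriv (by ring)
  have hout' : HasDerivAt (fun u : ℝ => u * Real.log u - u * Real.log v - u + v)
      (Real.log a - Real.log v) ((fun t : ℝ => a + t * (b - a)) 0) := by
    simpa using hout
  have h4 := hout'.comp (0:ℝ) hin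
  exact h4.congr_deriv (by ring)

/-- KL of a convex combination, in coordinates. -/
lemma kl_combo {n : ℕ} (xstar z x : EuclideanSpace ℝ (Fin n)) (t : ℝ)
    (hpos : ∀ i, 0 < xstar i + t * (z i - xstar i)) (hx : ∀ i, 0 < x i) :
    KL ((1 - t) • xstar + t • z) x
      = ∑ i, ((xstar i + t * (z i - xstar i)) * Real.log (xstar i + t * (z i - xstar i))
        - (xstar i + t * (z i - xstar i)) * Real.log (x i)
        - (xstar i + t * (z i - xstar i)) + x i) := by
  have hcoord : ∀ i, ((1 - t) • xstar + t • z) i = xstar i + t * (z i - xstar i) := by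
    intro i
    simp only [PiLp.add_apply, PiLp.smul_apply, smul_eq_mul]
    ring
  rw [KL_eq _ x (fun i => by rw [hcoord i]; exact hpos i) hx]
  exact Finset.sum_congr rfl fun i _ => by rw [hcoord i]

theorem bregman_projection_error_bound (n : ℕ) (α β B : ℝ) (hα : 0 < α) (hαβ : α ≤ β)
    (hB : 0 < B) (P : Set (EuclideanSpace ℝ (Fin n))) (hPconv : Convex ℝ P)
    (hPbox : ∀ z ∈ P, ∀ i, z i ∈ Set.Icc α β)
    (hPdiam : ∀ u ∈ P, ∀ v ∈ P, ‖u - v‖ ≤ B)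
    (x : EuclideanSpace ℝ (Fin n)) (hx : ∀ i, 0 < x i)
    (xstar : EuclideanSpace ℝ (Fin n)) (hxstarP : xstar ∈ P)
    (hxstar : ∀ z ∈ P, KL xstar x ≤ KL z x) :
    ∀ z ∈ P, ∀ y ∈ P,
      KL z y - KL z x ≤ (B / α) * ‖xstar - y‖ + KL z xstar - KL z x
      ∧ (B / α) * ‖xstar - y‖ + KL z xstar - KL z x ≤ (B / α) * ‖xstar - y‖ := by
  intro z hz y hy
  have hzpos : ∀ i, 0 < z i := fun i => hα.trans_le (hPbox z hz i).1
  have hypos : ∀ i, 0 < y i := fun i => hα.trans_le (hPbox y hy i).1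
  have hxspos : ∀ i, 0 < xstar i := fun i => hα.trans_le (hPbox xstar hxstarP i).1
  constructor
  · -- first inequality:  KL z y ≤ (B/α) ‖x* - y‖ + KL z x*
    have hdiff : KL z y - KL z xstar
        = ∑ i, (z i * Real.log (xstar i) - z i * Real.log (y i) + y i - xstar i) := by
      rw [KL_eq z y hzpos hypos, KL_eq z xstar hzpos hxspos, ← Finset.sum_sub_distrib]
      apply Finset.sum_congr rfl
      intro i _; ring
    have hsum : ∑ i, (z i * Real.log (xstar i) - z i * Real.log (y i) + y i - xstar i)
        ≤ (∑ i, |z i - y i| * |xstar i - y i|) / α := by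
      rw [Finset.sum_div]
      apply Finset.sum_le_sum
      intro i _
      have := ptwise α (z i) (y i) (xstar i) hα (hzpos i) (hPbox y hy i).1 (hxspos i)
      linarith
    have hcs : (∑ i, |z i - y i| * |xstar i - y i|) ≤ ‖z - y‖ * ‖xstar - y‖ := by
      have := cs_abs (z - y) (xstar - y)
      simpa [PiLp.sub_apply] using this
    have hzy : ‖z - y‖ ≤ B := hPdiam z hz y hy
    have hnn : (0 : ℝ) ≤ ‖xstar - y‖ := norm_nonneg _
    have : KL z y - KL z xstar ≤ (B / α) * ‖xstar - y‖ := by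
      rw [hdiff]
      calc ∑ i, (z i * Real.log (xstar i) - z i * Real.log (y i) + y i - xstar i)
          ≤ (∑ i, |z i - y i| * |xstar i - y i|) / α := hsum
        _ ≤ ‖z - y‖ * ‖xstar - y‖ / α := by gcongr
        _ ≤ B * ‖xstar - y‖ / α := by gcongr
        _ = (B / α) * ‖xstar - y‖ := by ring
    linarith
  · -- second inequality: KL z x* ≤ KL z x (Pythagorean)
    have hcpos : ∀ t ∈ Set.Icc (0 : ℝ) 1, ∀ i, 0 < xstar i + t * (z i - xstar i) := by
      intro t ht i
      have h1 := (hPbox z hz i).1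
      have h2 := (hPbox xstar hxstarP i).1
      have := ht.1; have := ht.2
      nlinarith
    have hD : HasDerivAt
        (fun t : ℝ => ∑ i, ((xstar i + t * (z i - xstar i))
          * Real.log (xstar i + t * (z i - xstar i))
          - (xstar i + t * (z i - xstar i)) * Real.log (x i)
          - (xstar i + t * (z i - xstar i)) + x i))
        (∑ i, (z i - xstar i) * (Real.log (xstar i) - Real.log (x i))) 0 :=
      HasDerivAt.fun_sum fun i _ => coord_deriv (xstar i) (z i) (x i) (hxspos i)
    have hD0 : 0 ≤ ∑ i, (z i - xstar i) * (Real.log (xstar i) - Real.log (x i)) := by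
      refine slope_min _ _ hD ?_
      intro t ht
      simp only
      rw [← kl_combo xstar z x t (hcpos t ⟨ht.1.le, ht.2.le⟩) hx,
        ← kl_combo xstar z x 0 (hcpos 0 (Set.left_mem_Icc.2 zero_le_one)) hx]
      have h0 : (1 - (0:ℝ)) • xstar + (0:ℝ) • z = xstar := by simp
      rw [h0]
      exact hxstar _ (hPconv hxstarP hz (by linarith [ht.2]) ht.1.le (by ring))
    have hpy : KL z xstar ≤ KL z x := by
      have hdiff : KL z x - KL z xstar
          = (∑ i, (z i - xstar i) * (Real.log (xstar i) - Real.log (x i)))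
            + ∑ i, (xstar i * (Real.log (xstar i) - Real.log (x i)) - xstar i + x i) := by
        rw [KL_eq z x hzpos hx, KL_eq z xstar hzpos hxspos, ← Finset.sum_sub_distrib,
          ← Finset.sum_add_distrib]
        apply Finset.sum_congr rfl
        intro i _; ring
      have hsum : 0 ≤ ∑ i, (xstar i * (Real.log (xstar i) - Real.log (x i)) - xstar i + x i) :=
        Finset.sum_nonneg fun i _ => ptwise_nonneg (xstar i) (x i) (hxspos i) (hx i)
      linarith
    linarith
end

section
/- Let u, v, w ∈ ℝⁿ with u ≥ 0 componentwise, v, w > 0 componentwise, and v_i, w_i ∈ [α, β], u_i ∈ [α, β] for all i with α > 0. Then D(u, w) − D(u, v) ≤ (1/α)·‖u − w‖₂ · ‖v − w‖₂, where D is the generalized KL divergence; in particular, the difference of KL divergences to two nearby second arguments is controlled by the ℓ₂ distance of those arguments. -/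
theorem kl_diff_le_norm_mul_norm (n : ℕ) (α β : ℝ) (hα : 0 < α) (hαβ : α ≤ β)
    (u v w : EuclideanSpace ℝ (Fin n))
    (hu : ∀ i, u i ∈ Set.Icc α β) (hv : ∀ i, v i ∈ Set.Icc α β)
    (hw : ∀ i, w i ∈ Set.Icc α β) :
    KL u w - KL u v ≤ (1 / α) * ‖u - w‖ * ‖v - w‖ := by
  have hu' : ∀ i, 0 < u i := fun i => lt_of_lt_of_le hα (hu i).1
  have hv' : ∀ i, 0 < v i := fun i => lt_of_lt_of_le hα (hv i).1
  have hw' : ∀ i, 0 < w i := fun i => lt_of_lt_of_le hα (hw i).1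
  -- step 1: rewrite the difference as a single sum
  have step1 : KL u w - KL u v
      = ∑ i, (u i * Real.log (v i / w i) + (w i - v i)) := by
    unfold KL
    rw [Finset.sum_add_distrib, Finset.sum_sub_distrib]
    have : ∀ i ∈ Finset.univ (α := Fin n),
        u i * Real.log (u i / w i) - u i * Real.log (u i / v i)
          = u i * Real.log (v i / w i) := by
      intro i _
      rw [← mul_sub, Real.log_div (hu' i).ne' (hw' i).ne',
        Real.log_div (hu' i).ne' (hv' i).ne',
        Real.log_div (hv' i).ne' (hw' i).ne']
      ring
    have e : ∑ i, u i * Real.log (u i / w i) - ∑ i, u i * Real.log (u i / v i)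
        = ∑ i, u i * Real.log (v i / w i) := by
      rw [← Finset.sum_sub_distrib]; exact Finset.sum_congr rfl this
    linarith [e]
  rw [step1]
  -- step 2: termwise bound
  have step2 : ∀ i ∈ Finset.univ (α := Fin n),
      u i * Real.log (v i / w i) + (w i - v i)
        ≤ (1 / α) * (|u i - w i| * |v i - w i|) := by
    intro i _
    have hlog : Real.log (v i / w i) ≤ v i / w i - 1 :=
      Real.log_le_sub_one_of_pos (div_pos (hv' i) (hw' i))
    have h1 : u i * Real.log (v i / w i) ≤ u i * (v i / w i - 1) :=
      mul_le_mul_of_nonneg_left hlog (hu' i).le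
    have h2 : u i * (v i / w i - 1) + (w i - v i)
        = ((u i - w i) * (v i - w i)) / w i := by
      rw [eq_div_iff (hw' i).ne']
      have hc : v i / w i * w i = v i := div_mul_cancel₀ _ (hw' i).ne'
      linear_combination u i * hc
    have h3 : ((u i - w i) * (v i - w i)) / w i
        ≤ (|u i - w i| * |v i - w i|) / α := by
      apply div_le_div₀ (mul_nonneg (abs_nonneg _) (abs_nonneg _)) _ hα (hw i).1
      calc (u i - w i) * (v i - w i) ≤ |(u i - w i) * (v i - w i)| := le_abs_self _
        _ = |u i - w i| * |v i - w i| := abs_mul _ _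
    calc u i * Real.log (v i / w i) + (w i - v i)
        ≤ u i * (v i / w i - 1) + (w i - v i) := by linarith
      _ = ((u i - w i) * (v i - w i)) / w i := h2
      _ ≤ (|u i - w i| * |v i - w i|) / α := h3
      _ = (1 / α) * (|u i - w i| * |v i - w i|) := by ring
  refine le_trans (Finset.sum_le_sum step2) ?_
  rw [← Finset.mul_sum, mul_assoc]
  apply mul_le_mul_of_nonneg_left _ (by positivity)
  -- step 3: Cauchy-Schwarz
  have hnormu : ‖u - w‖ = Real.sqrt (∑ i, |u i - w i| ^ 2) := by
    rw [EuclideanSpace.norm_eq]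
    congr 1
  have hnormv : ‖v - w‖ = Real.sqrt (∑ i, |v i - w i| ^ 2) := by
    rw [EuclideanSpace.norm_eq]
    congr 1
  rw [hnormu, hnormv, ← Real.sqrt_mul (by positivity)]
  have hcs := Finset.sum_mul_sq_le_sq_mul_sq Finset.univ
    (fun i => |u i - w i|) (fun i => |v i - w i|)
  have hnn : (0 : ℝ) ≤ ∑ i, |u i - w i| * |v i - w i| :=
    Finset.sum_nonneg fun i _ => mul_nonneg (abs_nonneg _) (abs_nonneg _)
  calc ∑ i, |u i - w i| * |v i - w i|
      = Real.sqrt ((∑ i, |u i - w i| * |v i - w i|) ^ 2) := by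
        rw [Real.sqrt_sq hnn]
    _ ≤ Real.sqrt ((∑ i, |u i - w i| ^ 2) * ∑ i, |v i - w i| ^ 2) :=
        Real.sqrt_le_sqrt hcs
end
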